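/- A subgraph H of a graph G with threshold assignment τ contains no resistant subgraph of G if and only if the vertices of H can be ordered v₁, v₂, …, vₙ such that for each i, the vertex vᵢ has at most d_G(vᵢ) − τ(vᵢ) neighbors among {vᵢ₊₁, …, vₙ}. -/

import Mathlib

open SimpleGraph

/-- One step of the irreversible activation process: every vertex with at least `τ v`
active neighbors becomes active, and active vertices stay active. -/
def activationStep {V : Type*} (G : SimpleGraph V) (τ : V → ℕ) (A : Set V) : Set V :=
  A ∪ {v | τ v ≤ (G.neighborSet v ∩ A).ncard}

/-- `D` is a dynamic monopoly (dynamo) of `(G, τ)`: iterating the activation process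
starting from `D` eventually activates all vertices. -/
def IsDynamo {V : Type*} (G : SimpleGraph V) (τ : V → ℕ) (D : Set V) : Prop :=
  ∃ j : ℕ, (activationStep G τ)^[j] D = Set.univ

/-- `K` is (the vertex set of) a resistant subgraph of `(G, τ)`:
every vertex `v` of `K` satisfies `d_K(v) ≥ d_G(v) − τ(v) + 1` (as integers). -/
def IsResistant {V : Type*} (G : SimpleGraph V) (τ : V → ℕ) (K : Set V) : Prop :=
  K.Nonempty ∧ ∀ v ∈ K, (G.neighborSet v).ncard + 1 ≤ (G.neighborSet v ∩ K).ncard + τ v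

/-- The minimum size of a dynamic monopoly of `(G, τ)`. -/
noncomputable def dyn {V : Type*} (G : SimpleGraph V) (τ : V → ℕ) : ℕ :=
  sInf {k : ℕ | ∃ D : Set V, D.ncard = k ∧ IsDynamo G τ D}

lemma aux_exists_list {V : Type*} [Fintype V] [DecidableEq V] (G : SimpleGraph V) (τ : V → ℕ) :
    ∀ (n : ℕ) (S : Finset V), S.card = n →
      (∀ K ⊆ (↑S : Set V), ¬ IsResistant G τ K) →
      ∃ l : List V, l.Nodup ∧ l.toFinset = S ∧
        ∀ (i : ℕ) (hi : i < l.length),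
          (G.neighborSet (l.get ⟨i, hi⟩) ∩ ↑(l.drop (i + 1)).toFinset).ncard
              + τ (l.get ⟨i, hi⟩)
            ≤ (G.neighborSet (l.get ⟨i, hi⟩)).ncard := by
  intro n
  induction n with
  | zero =>
    intro S hS _
    exact ⟨[], by simp, by simp [Finset.card_eq_zero.mp hS], by simp⟩
  | succ n ih =>
    intro S hS hK
    have hne : (↑S : Set V).Nonempty := by
      rw [Finset.coe_nonempty, ← Finset.card_pos, hS]; omega
    have hSnr := hK (↑S) (subset_refl _)
    rw [IsResistant, not_and] at hSnr
    obtain ⟨v, hv, hvlt⟩ := by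
      have := hSnr hne
      push_neg at this
      exact this
    have hvS : v ∈ S := hv
    have hcard : (S.erase v).card = n := by
      rw [Finset.card_erase_of_mem hvS, hS]; rfl
    obtain ⟨l, hnd, htf, hprop⟩ := ih (S.erase v) hcard (by
      intro K hKsub
      exact hK K (hKsub.trans (by simp [Finset.coe_subset, Finset.erase_subset])))
    refine ⟨v :: l, ?_, ?_, ?_⟩
    · refine List.nodup_cons.mpr ⟨?_, hnd⟩
      intro hmem
      have : v ∈ S.erase v := htf ▸ List.mem_toFinset.mpr hmem
      simp at this
    · rw [List.toFinset_cons, htf, Finset.insert_erase hvS]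
    · intro i hi
      match i with
      | 0 =>
        simp only [List.get_cons_zero, List.drop_succ_cons, List.drop_zero]
        have heq : G.neighborSet v ∩ ↑l.toFinset = G.neighborSet v ∩ ↑S := by
          rw [htf]
          ext w
          simp only [Set.mem_inter_iff, Finset.coe_erase, Set.mem_diff,
            Set.mem_singleton_iff, Finset.mem_coe]
          constructor
          · rintro ⟨h1, h2, _⟩; exact ⟨h1, h2⟩
          · rintro ⟨h1, h2⟩
            refine ⟨h1, h2, ?_⟩
            rintro rfl
            exact G.irrefl h1
        have hg : (v :: l).get ⟨0, hi⟩ = v := rfl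
        rw [hg, heq]
        omega
      | Nat.succ j =>
        have hj : j < l.length := by simpa using hi
        have := hprop j hj
        simpa using this


/-- A (induced) subgraph `H` of `(G, τ)` contains no resistant subgraph of `G` iff
its vertices can be ordered `v₁, …, vₙ` so that each `vᵢ` has at most
`d_G(vᵢ) − τ(vᵢ)` neighbors among `{vᵢ₊₁, …, vₙ}`. -/
theorem stmt0 {V : Type*} [Fintype V] [DecidableEq V] (G : SimpleGraph V) (τ : V → ℕ)
    (H : Set V) :
    (∀ K ⊆ H, ¬ IsResistant G τ K) ↔
      ∃ l : List V, l.Nodup ∧ (↑l.toFinset : Set V) = H ∧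
        ∀ (i : ℕ) (hi : i < l.length),
          (G.neighborSet (l.get ⟨i, hi⟩) ∩ ↑(l.drop (i + 1)).toFinset).ncard
              + τ (l.get ⟨i, hi⟩)
            ≤ (G.neighborSet (l.get ⟨i, hi⟩)).ncard := by
  constructor
  · intro hK
    have hHfin : H.Finite := Set.toFinite H
    obtain ⟨l, h1, h2, h3⟩ := aux_exists_list G τ hHfin.toFinset.card hHfin.toFinset rfl (by
      intro K hsub
      exact hK K (by simpa using hsub))
    exact ⟨l, h1, by simp [h2], h3⟩
  · rintro ⟨l, hnd, hcov, hprop⟩ K hKH ⟨hKne, hres⟩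
    -- every element of K is in l
    have hmem : ∀ w ∈ K, w ∈ l := by
      intro w hw
      have : w ∈ (↑l.toFinset : Set V) := hcov ▸ hKH hw
      simpa using this
    obtain ⟨w0, hw0⟩ := hKne
    have hex : ∃ i : ℕ, ∃ h : i < l.length, l.get ⟨i, h⟩ ∈ K := by
      obtain ⟨⟨i, hi⟩, hg⟩ := List.mem_iff_get.mp (hmem w0 hw0)
      exact ⟨i, hi, hg ▸ hw0⟩
    classical
    obtain ⟨hi, hvK⟩ := Nat.find_spec hex
    set i := Nat.find hex with hidef
    set v := l.get ⟨i, hi⟩ with hvdef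
    have hsub : G.neighborSet v ∩ K ⊆ G.neighborSet v ∩ ↑(l.drop (i + 1)).toFinset := by
      rintro w ⟨hwN, hwK⟩
      refine ⟨hwN, ?_⟩
      obtain ⟨⟨j, hj⟩, hgj⟩ := List.mem_iff_get.mp (hmem w hwK)
      have hji : i ≤ j := by
        by_contra hlt
        exact Nat.find_min hex (by omega) ⟨hj, hgj ▸ hwK⟩
      have hwv : w ≠ v := by
        rintro rfl
        exact G.irrefl hwN
      have hjne : j ≠ i := by
        rintro rfl
        exact hwv (hgj ▸ rfl)
      have hj1 : i + 1 ≤ j := by omega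
      simp only [Finset.coe_sort_coe, Finset.mem_coe, List.mem_toFinset]
      refine List.mem_iff_getElem.mpr ⟨j - (i + 1), ?_, ?_⟩
      · rw [List.length_drop]; omega
      · rw [List.getElem_drop]
        have heq : l[i + 1 + (j - (i + 1))]'(by omega) = l[j] := by
          congr 1
          omega
        rw [heq, ← (List.get_eq_getElem : l.get ⟨j, hj⟩ = _), hgj]
    have hle : (G.neighborSet v ∩ K).ncard ≤
        (G.neighborSet v ∩ ↑(l.drop (i + 1)).toFinset).ncard :=
      Set.ncard_le_ncard hsub (Set.toFinite _)
    have h1 := hres v hvK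
    have h2 := hprop i hi
    rw [← hvdef] at h2
    omega
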